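/- For every mixed stopping strategy p and every x ∈ E: φ_p(x) = E_x[ 1_{τ_p<∞} Σ_{i≥0} (Π_{j=1}^{i} (1 − p_{X_{j−1}})) p_{X_i} f(X_i) + 1_{τ_p=∞} lim_n f(X_n) ] and E_x[φ_p(X_1)] = E_x[ 1_{τ_p<∞} Σ_{i≥1} (Π_{j=2}^{i} (1 − p_{X_{j−1}})) p_{X_i} f(X_i) + 1_{τ_p=∞} lim_n f(X_n) ] (with empty products equal to 1); moreover, for each fixed x ∈ E the maps p ↦ φ_p(x) and p ↦ E_x[φ_p(X_1)] are continuous on [0,1]^N. -/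

import Mathlib

/-!
Analytic model of the time-inconsistent stopping framework of Christensen & Lindensjö,
"Time-inconsistent stopping, myopic adjustment & equilibrium stability".

A time-homogeneous Markov chain `X` on a finite state space `E` is encoded by its
transition matrix `P` (`P x y = P_x(X_1 = y)`).  A mixed stopping strategy is a vector
`p ∈ [0,1]^E`; the associated stopping time is `τ_p = min {n ≥ 0 : Y_n ≤ p_{X_n}}`,
where the `Y_n` are i.i.d. uniform randomization devices.  The quantity
`phi P p f x = E_x[f(X_{τ_p})]` (with the convention `f(X_{τ_p}) := lim_n f(X_n)` on
`{τ_p = ∞}`, the limit existing a.s. by absorption) is realized analytically, via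
dominated convergence, as the limit in `n` of the finite-horizon values
`phiSeq P p f n x = E_x[f(X_{τ_p ∧ n})]`, which satisfy the one-step recursion given
by the Markov property.  Likewise `step P v x = E_x[v(X_1)]`.
-/

open Filter

variable {E : Type*}

/-- One-step expectation operator: `step P v x = E_x[v(X_1)] = ∑ y, P x y * v y`. -/
noncomputable def step [Fintype E] (P : E → E → ℝ) (v : E → ℝ) (x : E) : ℝ :=
  ∑ y, P x y * v y

/-- Finite-horizon value `phiSeq P p f n x = E_x[f(X_{τ_p ∧ n})]`. -/
noncomputable def phiSeq [Fintype E] (P : E → E → ℝ) (p f : E → ℝ) : ℕ → E → ℝ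
  | 0 => f
  | n + 1 => fun x => p x * f x + (1 - p x) * step P (phiSeq P p f n) x

/-- `phi P p f x = E_x[f(X_{τ_p})]`, with the convention `f(X_{τ_p}) := lim_n f(X_n)`
on `{τ_p = ∞}`; by dominated convergence it is the limit of the finite-horizon values. -/
noncomputable def phi [Fintype E] (P : E → E → ℝ) (p f : E → ℝ) (x : E) : ℝ :=
  limUnder atTop fun n => phiSeq P p f n x

/-- `P` is a transition matrix (row-stochastic). -/
def IsTransition [Fintype E] (P : E → E → ℝ) : Prop :=
  (∀ x y, 0 ≤ P x y) ∧ ∀ x, ∑ y, P x y = 1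

/-- `a` is an absorbing state of the chain. -/
def IsAbsorbingState (P : E → E → ℝ) (a : E) : Prop := P a a = 1

/-- The chain is absorbing: from each starting state, some absorbing state is reached
with positive probability in a finite number of steps. -/
def IsAbsorbingChain [Fintype E] [DecidableEq E] (P : E → E → ℝ) : Prop :=
  ∀ x : E, ∃ (a : E) (n : ℕ), IsAbsorbingState P a ∧ 0 < ((Matrix.of P) ^ n) x a

/-- A mixed stopping strategy: a vector in `[0,1]^E`. -/
def IsStrategy (p : E → ℝ) : Prop := ∀ x, p x ∈ Set.Icc (0 : ℝ) 1

/-- `Kval P f h g p x q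
      = q f(x) + (1-q) E_x[φ_p(X_1)] + g (q h(x) + (1-q) E_x[ψ_p(X_1)])`. -/
noncomputable def Kval [Fintype E] (P : E → E → ℝ) (f h : E → ℝ) (g : ℝ → ℝ)
    (p : E → ℝ) (x : E) (q : ℝ) : ℝ :=
  q * f x + (1 - q) * step P (phi P p f) x
    + g (q * h x + (1 - q) * step P (phi P p h) x)

/-- `Jval P f h g p x = φ_p(x) + g(ψ_p(x)) = E_x[f(X_{τ_p})] + g(E_x[h(X_{τ_p})])`. -/
noncomputable def Jval [Fintype E] (P : E → E → ℝ) (f h : E → ℝ) (g : ℝ → ℝ)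
    (p : E → ℝ) (x : E) : ℝ :=
  phi P p f x + g (phi P p h x)

/-- Subgame perfect Nash equilibrium (condition (EqI)). -/
def IsEquilibrium [Fintype E] (P : E → E → ℝ) (f h : E → ℝ) (g : ℝ → ℝ)
    (p : E → ℝ) : Prop :=
  ∀ x : E, ∀ q ∈ Set.Icc (0 : ℝ) 1, Kval P f h g p x q ≤ Jval P f h g p x

/-- Expectation over the chain of a functional of the first `n+1` positions:
`pathExp P x n F = E_x[F (X_0, …, X_n)]`. -/
noncomputable def pathExp [Fintype E] (P : E → E → ℝ) :
    E → (n : ℕ) → ((Fin (n + 1) → E) → ℝ) → ℝ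
  | x, 0, F => F (fun _ => x)
  | x, n + 1, F => ∑ y, P x y * pathExp P y n (fun ω => F (Fin.cons x ω))

namespace StopAux

open Filter Finset

variable {E : Type*} [Fintype E]

lemma pathExp_add (P : E → E → ℝ) : ∀ (n : ℕ) (x : E) (F G : (Fin (n + 1) → E) → ℝ),
    pathExp P x n (fun ω => F ω + G ω) = pathExp P x n F + pathExp P x n G
  | 0, x, F, G => rfl
  | (n + 1), x, F, G => by
    simp only [pathExp, pathExp_add P n, mul_add, Finset.sum_add_distrib]

lemma pathExp_neg (P : E → E → ℝ) : ∀ (n : ℕ) (x : E) (F : (Fin (n + 1) → E) → ℝ),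
    pathExp P x n (fun ω => -F ω) = -pathExp P x n F
  | 0, x, F => rfl
  | (n + 1), x, F => by
    simp only [pathExp, pathExp_neg P n, mul_neg, ← Finset.sum_neg_distrib]

lemma pathExp_const_mul (P : E → E → ℝ) : ∀ (n : ℕ) (x : E) (c : ℝ)
    (F : (Fin (n + 1) → E) → ℝ),
    pathExp P x n (fun ω => c * F ω) = c * pathExp P x n F
  | 0, x, c, F => rfl
  | (n + 1), x, c, F => by
    simp only [pathExp, pathExp_const_mul P n, Finset.mul_sum]
    exact Finset.sum_congr rfl fun y _ => by ring

lemma pathExp_mono (P : E → E → ℝ) (hP0 : ∀ x y, 0 ≤ P x y) :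
    ∀ (n : ℕ) (x : E) (F G : (Fin (n + 1) → E) → ℝ), (∀ ω, F ω ≤ G ω) →
    pathExp P x n F ≤ pathExp P x n G
  | 0, x, F, G, h => h _
  | (n + 1), x, F, G, h => by
    simp only [pathExp]
    exact Finset.sum_le_sum fun y _ => mul_le_mul_of_nonneg_left
      (pathExp_mono P hP0 n y _ _ fun ω => h _) (hP0 x y)

lemma pathExp_nonneg (P : E → E → ℝ) (hP0 : ∀ x y, 0 ≤ P x y)
    (n : ℕ) (x : E) (F : (Fin (n + 1) → E) → ℝ) (hF : ∀ ω, 0 ≤ F ω) :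
    0 ≤ pathExp P x n F := by
  have := pathExp_mono P hP0 n x (fun _ => 0) F (fun ω => hF ω)
  rwa [show pathExp P x n (fun _ => (0:ℝ)) = 0 from by
    simpa using pathExp_const_mul P n x 0 F] at this

lemma pathExp_abs_le (P : E → E → ℝ) (hP0 : ∀ x y, 0 ≤ P x y)
    (n : ℕ) (x : E) (F G : (Fin (n + 1) → E) → ℝ) (h : ∀ ω, |F ω| ≤ G ω) :
    |pathExp P x n F| ≤ pathExp P x n G := by
  rw [abs_le]
  constructor
  · have := pathExp_mono P hP0 n x (fun ω => -G ω) F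
      (fun ω => by show -G ω ≤ F ω; have := h ω; have := neg_abs_le (F ω); linarith)
    rwa [pathExp_neg] at this
  · exact pathExp_mono P hP0 n x F G fun ω => (le_abs_self _).trans (h ω)

end StopAux
namespace StopAux

variable {E : Type*} [Fintype E]

/-- `Aterm i x = E_x[∏_{j<i}(1-p(X_j)) · p(X_i) f(X_i)]`. -/
noncomputable def Aterm (P : E → E → ℝ) (p f : E → ℝ) (i : ℕ) (x : E) : ℝ :=
  pathExp P x i (fun ω =>
    (∏ j : Fin i, (1 - p (ω j.castSucc))) * (p (ω (Fin.last i)) * f (ω (Fin.last i))))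

/-- `Bterm n x = E_x[∏_{j≤n}(1-p(X_j)) · f(X_n)]`. -/
noncomputable def Bterm (P : E → E → ℝ) (p f : E → ℝ) (n : ℕ) (x : E) : ℝ :=
  pathExp P x n (fun ω => (∏ j : Fin (n + 1), (1 - p (ω j))) * f (ω (Fin.last n)))

lemma Aterm_zero (P : E → E → ℝ) (p f : E → ℝ) (x : E) :
    Aterm P p f 0 x = p x * f x := by
  simp [Aterm, pathExp]

lemma Bterm_zero (P : E → E → ℝ) (p f : E → ℝ) (x : E) :
    Bterm P p f 0 x = (1 - p x) * f x := by
  simp [Bterm, pathExp]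

lemma Aterm_succ (P : E → E → ℝ) (p f : E → ℝ) (i : ℕ) (x : E) :
    Aterm P p f (i + 1) x = (1 - p x) * ∑ y, P x y * Aterm P p f i y := by
  have key : ∀ y : E, pathExp P y i (fun ω =>
      (∏ j : Fin (i + 1), (1 - p ((Fin.cons x ω : Fin (i+2) → E) j.castSucc)))
        * (p ((Fin.cons x ω : Fin (i+2) → E) (Fin.last (i + 1))) * f ((Fin.cons x ω : Fin (i+2) → E) (Fin.last (i + 1)))))
      = (1 - p x) * Aterm P p f i y := by
    intro y
    rw [Aterm, ← pathExp_const_mul]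
    congr 1
    funext ω
    have hlast : (Fin.cons x ω : Fin (i+2) → E) (Fin.last (i + 1)) = ω (Fin.last i) := by
      rw [← Fin.succ_last, Fin.cons_succ]
    have hprod : (∏ j : Fin (i + 1), (1 - p ((Fin.cons x ω : Fin (i+2) → E) j.castSucc)))
        = (1 - p x) * ∏ j : Fin i, (1 - p (ω j.castSucc)) := by
      rw [Fin.prod_univ_succ]
      simp only [Fin.castSucc_zero, Fin.cons_zero, ← Fin.succ_castSucc, Fin.cons_succ]
    rw [hlast, hprod]
    ring
  rw [show Aterm P p f (i + 1) x = ∑ y, P x y * pathExp P y i (fun ω =>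
      (∏ j : Fin (i + 1), (1 - p ((Fin.cons x ω : Fin (i+2) → E) j.castSucc)))
        * (p ((Fin.cons x ω : Fin (i+2) → E) (Fin.last (i + 1))) * f ((Fin.cons x ω : Fin (i+2) → E) (Fin.last (i + 1)))))
    from rfl]
  rw [Finset.mul_sum]
  exact Finset.sum_congr rfl fun y _ => by rw [key y]; ring

lemma Bterm_succ (P : E → E → ℝ) (p f : E → ℝ) (n : ℕ) (x : E) :
    Bterm P p f (n + 1) x = (1 - p x) * ∑ y, P x y * Bterm P p f n y := by
  have key : ∀ y : E, pathExp P y n (fun ω =>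
      (∏ j : Fin (n + 2), (1 - p ((Fin.cons x ω : Fin (n+2) → E) j)))
        * f ((Fin.cons x ω : Fin (n+2) → E) (Fin.last (n + 1))))
      = (1 - p x) * Bterm P p f n y := by
    intro y
    rw [Bterm, ← pathExp_const_mul]
    congr 1
    funext ω
    have hlast : (Fin.cons x ω : Fin (n+2) → E) (Fin.last (n + 1)) = ω (Fin.last n) := by
      rw [← Fin.succ_last, Fin.cons_succ]
    have hprod : (∏ j : Fin (n + 2), (1 - p ((Fin.cons x ω : Fin (n+2) → E) j)))
        = (1 - p x) * ∏ j : Fin (n + 1), (1 - p (ω j)) := by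
      rw [Fin.prod_univ_succ]
      simp [Fin.cons_succ]
    rw [hlast, hprod]
    ring
  rw [show Bterm P p f (n + 1) x = ∑ y, P x y * pathExp P y n (fun ω =>
      (∏ j : Fin (n + 2), (1 - p ((Fin.cons x ω : Fin (n+2) → E) j)))
        * f ((Fin.cons x ω : Fin (n+2) → E) (Fin.last (n + 1)))) from rfl]
  rw [Finset.mul_sum]
  exact Finset.sum_congr rfl fun y _ => by rw [key y]; ring

lemma phiSeq_eq (P : E → E → ℝ) (p f : E → ℝ) : ∀ (n : ℕ) (x : E),
    phiSeq P p f n x = (∑ i ∈ Finset.range (n + 1), Aterm P p f i x) + Bterm P p f n x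
  | 0, x => by
    show f x = _
    rw [Finset.sum_range_one, Aterm_zero, Bterm_zero]
    ring
  | (n + 1), x => by
    show p x * f x + (1 - p x) * step P (phiSeq P p f n) x = _
    have hstep : step P (phiSeq P p f n) x
        = (∑ i ∈ Finset.range (n + 1), ∑ y, P x y * Aterm P p f i y)
          + ∑ y, P x y * Bterm P p f n y := by
      simp only [step, phiSeq_eq P p f n, mul_add, Finset.sum_add_distrib,
        Finset.mul_sum]
      rw [Finset.sum_comm]
    rw [hstep, Finset.sum_range_succ' (fun i => Aterm P p f i x) (n + 1),
      Aterm_zero, Bterm_succ]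
    simp only [Aterm_succ]
    rw [← Finset.mul_sum]
    ring

end StopAux
namespace StopAux

variable {E : Type*} [Fintype E]

lemma absorbing_off {P : E → E → ℝ} (hP : IsTransition P) {a : E} (ha : P a a = 1)
    {y : E} (hy : y ≠ a) : P a y = 0 := by
  classical
  have hsum : ∑ z, P a z = 1 := hP.2 a
  have h1 : ∑ z ∈ (Finset.univ.erase a), P a z = 0 := by
    have := Finset.add_sum_erase Finset.univ (P a) (Finset.mem_univ a)
    rw [hsum, ha] at this
    linarith
  have hnn : ∀ z ∈ Finset.univ.erase a, 0 ≤ P a z := fun z _ => hP.1 a z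
  have := (Finset.sum_eq_zero_iff_of_nonneg hnn).1 h1 y
    (Finset.mem_erase.2 ⟨hy, Finset.mem_univ y⟩)
  exact this

lemma step_absorbing {P : E → E → ℝ} (hP : IsTransition P) {a : E} (ha : P a a = 1)
    (v : E → ℝ) : step P v a = v a := by
  classical
  rw [step, Finset.sum_eq_single a]
  · rw [ha, one_mul]
  · intro y _ hy
    rw [absorbing_off hP ha hy, zero_mul]
  · intro h; exact absurd (Finset.mem_univ a) h

lemma step_abs_le {P : E → E → ℝ} (hP : IsTransition P) {v : E → ℝ} {M : ℝ}
    (hv : ∀ y, |v y| ≤ M) (x : E) : |step P v x| ≤ M := by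
  calc |step P v x| ≤ ∑ y, |P x y * v y| := Finset.abs_sum_le_sum_abs _ _
    _ ≤ ∑ y, P x y * M := by
        refine Finset.sum_le_sum fun y _ => ?_
        rw [abs_mul, abs_of_nonneg (hP.1 x y)]
        exact mul_le_mul_of_nonneg_left (hv y) (hP.1 x y)
    _ = M := by rw [← Finset.sum_mul, hP.2 x, one_mul]

lemma phiSeq_abs_le {P : E → E → ℝ} (hP : IsTransition P) {p : E → ℝ}
    (hp : IsStrategy p) {f : E → ℝ} {M : ℝ} (hf : ∀ y, |f y| ≤ M) :
    ∀ (n : ℕ) (x : E), |phiSeq P p f n x| ≤ M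
  | 0, x => hf x
  | (n + 1), x => by
    show |p x * f x + (1 - p x) * step P (phiSeq P p f n) x| ≤ M
    have h1 := (hp x).1
    have h2 := (hp x).2
    have hs := step_abs_le hP (v := phiSeq P p f n)
      (fun y => phiSeq_abs_le hP hp hf n y) x
    calc |p x * f x + (1 - p x) * step P (phiSeq P p f n) x|
        ≤ |p x * f x| + |(1 - p x) * step P (phiSeq P p f n) x| := abs_add_le _ _
      _ = p x * |f x| + (1 - p x) * |step P (phiSeq P p f n) x| := by
          rw [abs_mul, abs_mul, abs_of_nonneg h1, abs_of_nonneg (show (0:ℝ) ≤ 1 - p x by linarith)]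
      _ ≤ p x * M + (1 - p x) * M := by
          have := hf x
          have := mul_le_mul_of_nonneg_left (hf x) h1
          have := mul_le_mul_of_nonneg_left hs (by linarith : (0:ℝ) ≤ 1 - p x)
          linarith
      _ = M := by ring

lemma phiSeq_absorbing {P : E → E → ℝ} (hP : IsTransition P) (p f : E → ℝ)
    {a : E} (ha : P a a = 1) : ∀ n : ℕ, phiSeq P p f n a = f a
  | 0 => rfl
  | (n + 1) => by
    show p a * f a + (1 - p a) * step P (phiSeq P p f n) a = f a
    rw [step_absorbing hP ha, phiSeq_absorbing hP p f ha n]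
    ring

lemma phiSeq_one {P : E → E → ℝ} (hP : IsTransition P) (p : E → ℝ) :
    ∀ (n : ℕ) (x : E), phiSeq P p (fun _ => 1) n x = 1
  | 0, x => rfl
  | (n + 1), x => by
    show p x * 1 + (1 - p x) * step P (phiSeq P p (fun _ => 1) n) x = 1
    have : step P (phiSeq P p (fun _ => 1) n) x = 1 := by
      rw [step]
      simp only [phiSeq_one hP p n, mul_one]
      exact hP.2 x
    rw [this]; ring

lemma Aterm_one_nonneg {P : E → E → ℝ} (hP : IsTransition P) {p : E → ℝ}
    (hp : IsStrategy p) (i : ℕ) (x : E) :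
    0 ≤ Aterm P p (fun _ => 1) i x := by
  refine pathExp_nonneg P hP.1 i x _ fun ω => ?_
  refine mul_nonneg (Finset.prod_nonneg fun j _ => by linarith [(hp (ω j.castSucc)).2]) ?_
  have := (hp (ω (Fin.last i))).1
  simp only []
  nlinarith

lemma Bterm_one_nonneg {P : E → E → ℝ} (hP : IsTransition P) {p : E → ℝ}
    (hp : IsStrategy p) (n : ℕ) (x : E) :
    0 ≤ Bterm P p (fun _ => 1) n x := by
  refine pathExp_nonneg P hP.1 n x _ fun ω => ?_
  refine mul_nonneg (Finset.prod_nonneg fun j _ => by linarith [(hp (ω j)).2]) ?_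
  norm_num

lemma sum_Aterm_one_le {P : E → E → ℝ} (hP : IsTransition P) {p : E → ℝ}
    (hp : IsStrategy p) (n : ℕ) (x : E) :
    ∑ i ∈ Finset.range n, Aterm P p (fun _ => 1) i x ≤ 1 := by
  have h1 : ∑ i ∈ Finset.range (n + 1), Aterm P p (fun _ => 1) i x ≤ 1 := by
    have := phiSeq_eq P p (fun _ => 1) n x
    rw [phiSeq_one hP p n x] at this
    have hB := Bterm_one_nonneg hP hp n x
    linarith
  have h2 : ∑ i ∈ Finset.range n, Aterm P p (fun _ => 1) i x
      ≤ ∑ i ∈ Finset.range (n + 1), Aterm P p (fun _ => 1) i x := by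
    rw [Finset.sum_range_succ]
    linarith [Aterm_one_nonneg hP hp n x]
  linarith

lemma Aterm_abs_le {P : E → E → ℝ} (hP : IsTransition P) {p : E → ℝ}
    (hp : IsStrategy p) {f : E → ℝ} {M : ℝ} (hf : ∀ y, |f y| ≤ M)
    (i : ℕ) (x : E) :
    |Aterm P p f i x| ≤ M * Aterm P p (fun _ => 1) i x := by
  rw [Aterm, show M * Aterm P p (fun _ => 1) i x = pathExp P x i (fun ω =>
    M * ((∏ j : Fin i, (1 - p (ω j.castSucc))) * (p (ω (Fin.last i)) * 1)))
    from (pathExp_const_mul P i x M _).symm]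
  refine pathExp_abs_le P hP.1 i x _ _ fun ω => ?_
  have hprod : 0 ≤ ∏ j : Fin i, (1 - p (ω j.castSucc)) :=
    Finset.prod_nonneg fun j _ => by linarith [(hp (ω j.castSucc)).2]
  have hpx := (hp (ω (Fin.last i))).1
  rw [abs_mul, abs_mul, abs_of_nonneg hprod, abs_of_nonneg hpx]
  rw [mul_one, show M * ((∏ j : Fin i, (1 - p (ω j.castSucc))) * (p (ω (Fin.last i))))
    = (∏ j : Fin i, (1 - p (ω j.castSucc))) * (p (ω (Fin.last i)) * M) from by ring]
  refine mul_le_mul_of_nonneg_left ?_ hprod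
  exact mul_le_mul_of_nonneg_left (hf _) hpx

lemma Aterm_summable {P : E → E → ℝ} (hP : IsTransition P) {p : E → ℝ}
    (hp : IsStrategy p) {f : E → ℝ} {M : ℝ} (hM : 0 ≤ M) (hf : ∀ y, |f y| ≤ M)
    (x : E) : Summable (fun i => Aterm P p f i x) := by
  refine Summable.of_abs (summable_of_sum_range_le (c := M)
    (fun i => abs_nonneg _) fun n => ?_)
  calc ∑ i ∈ Finset.range n, |Aterm P p f i x|
      ≤ ∑ i ∈ Finset.range n, M * Aterm P p (fun _ => 1) i x :=
        Finset.sum_le_sum fun i _ => Aterm_abs_le hP hp hf i x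
    _ = M * ∑ i ∈ Finset.range n, Aterm P p (fun _ => 1) i x := by
        rw [Finset.mul_sum]
    _ ≤ M * 1 := mul_le_mul_of_nonneg_left (sum_Aterm_one_le hP hp n x) hM
    _ = M := mul_one M

end StopAux
namespace StopAux

variable {E : Type*} [Fintype E]

open Classical in
/-- `eFn P n x = P_x(X_n is not absorbing)`. -/
noncomputable def eFn (P : E → E → ℝ) : ℕ → E → ℝ
  | 0 => fun x => if P x x = 1 then 0 else 1
  | (n + 1) => fun x => ∑ y, P x y * eFn P n y

lemma eFn_nonneg {P : E → E → ℝ} (hP : IsTransition P) :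
    ∀ (n : ℕ) (x : E), 0 ≤ eFn P n x
  | 0, x => by
    show (0:ℝ) ≤ if P x x = 1 then 0 else 1
    split <;> norm_num
  | (n + 1), x => by
    rw [eFn]
    exact Finset.sum_nonneg fun y _ => mul_nonneg (hP.1 x y) (eFn_nonneg hP n y)

lemma eFn_le_one {P : E → E → ℝ} (hP : IsTransition P) :
    ∀ (n : ℕ) (x : E), eFn P n x ≤ 1
  | 0, x => by
    show (if P x x = 1 then (0:ℝ) else 1) ≤ 1
    split <;> norm_num
  | (n + 1), x => by
    rw [eFn]
    calc ∑ y, P x y * eFn P n y ≤ ∑ y, P x y * 1 :=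
          Finset.sum_le_sum fun y _ =>
            mul_le_mul_of_nonneg_left (eFn_le_one hP n y) (hP.1 x y)
      _ = 1 := by simp [hP.2 x]

lemma eFn_absorbing {P : E → E → ℝ} (hP : IsTransition P) {a : E} (ha : P a a = 1) :
    ∀ n : ℕ, eFn P n a = 0
  | 0 => by rw [eFn]; simp [ha]
  | (n + 1) => by
    rw [eFn]
    have : ∀ y, P a y * eFn P n y = 0 := by
      intro y
      by_cases hy : y = a
      · rw [hy, eFn_absorbing hP ha n, mul_zero]
      · rw [absorbing_off hP ha hy, zero_mul]
    simp [this]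

lemma eFn_succ_le {P : E → E → ℝ} (hP : IsTransition P) :
    ∀ (n : ℕ) (x : E), eFn P (n + 1) x ≤ eFn P n x
  | 0, x => by
    by_cases hx : P x x = 1
    · rw [eFn_absorbing hP hx, eFn_absorbing hP hx]
    · calc eFn P 1 x ≤ 1 := eFn_le_one hP 1 x
        _ = eFn P 0 x := by rw [eFn]; simp [hx]
  | (n + 1), x => by
    show ∑ y, P x y * eFn P (n + 1) y ≤ ∑ y, P x y * eFn P n y
    exact Finset.sum_le_sum fun y _ =>
      mul_le_mul_of_nonneg_left (eFn_succ_le hP n y) (hP.1 x y)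

lemma eFn_antitone {P : E → E → ℝ} (hP : IsTransition P) (x : E) :
    Antitone (fun n => eFn P n x) :=
  antitone_nat_of_succ_le fun n => eFn_succ_le hP n x

lemma eFn_matrix [DecidableEq E] {P : E → E → ℝ} :
    ∀ (n : ℕ) (x : E), eFn P n x = ∑ y, ((Matrix.of P) ^ n) x y * eFn P 0 y
  | 0, x => by
    classical
    rw [Finset.sum_eq_single x]
    · simp [pow_zero, Matrix.one_apply_eq]
    · intro y _ hy
      simp [pow_zero, Matrix.one_apply_ne' hy]
    · intro h; exact absurd (Finset.mem_univ x) h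
  | (n + 1), x => by
    rw [show eFn P (n + 1) x = ∑ y, P x y * eFn P n y from rfl]
    have hpow : ∀ y, ((Matrix.of P) ^ (n + 1)) x y
        = ∑ z, P x z * ((Matrix.of P) ^ n) z y := by
      intro y
      rw [pow_succ']
      rfl
    simp only [eFn_matrix n, hpow, Finset.mul_sum, Finset.sum_mul]
    rw [Finset.sum_comm]
    refine Finset.sum_congr rfl fun y _ => Finset.sum_congr rfl fun z _ => by ring

lemma eFn_lt_one_of_abs [DecidableEq E] {P : E → E → ℝ} (hP : IsTransition P)
    {x a : E} {n : ℕ} (ha : P a a = 1) (hpos : 0 < ((Matrix.of P) ^ n) x a) :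
    eFn P n x < 1 := by
  classical
  have hpownn : ∀ (m : ℕ) (u v : E), 0 ≤ ((Matrix.of P) ^ m) u v := by
    intro m
    induction m with
    | zero => intro u v; by_cases h : u = v <;> simp [h, Matrix.one_apply, le_refl]
    | succ m ih =>
      intro u v
      rw [pow_succ']
      exact Finset.sum_nonneg fun z _ => mul_nonneg (hP.1 u z) (ih z v)
  have hpowsum : ∀ (m : ℕ) (u : E), ∑ v, ((Matrix.of P) ^ m) u v = 1 := by
    intro m
    induction m with
    | zero => intro u; simp [Matrix.one_apply]
    | succ m ih =>
      intro u
      have : ∀ v, ((Matrix.of P) ^ (m + 1)) u v = ∑ z, P u z * ((Matrix.of P) ^ m) z v := by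
        intro v; rw [pow_succ']; rfl
      simp only [this]
      rw [Finset.sum_comm]
      simp only [← Finset.mul_sum, ih]
      simp [hP.2 u]
  rw [eFn_matrix]
  have h1 : ∑ y, ((Matrix.of P) ^ n) x y * eFn P 0 y
      ≤ ∑ y, ((Matrix.of P) ^ n) x y * (if y = a then 0 else 1) := by
    refine Finset.sum_le_sum fun y _ => ?_
    refine mul_le_mul_of_nonneg_left ?_ (hpownn n x y)
    by_cases hy : y = a
    · simp [hy, eFn_absorbing hP ha 0]
    · simp only [if_neg hy]
      exact eFn_le_one hP 0 y
  have h2 : ∑ y, ((Matrix.of P) ^ n) x y * (if y = a then 0 else 1)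
      = (∑ y, ((Matrix.of P) ^ n) x y) - ((Matrix.of P) ^ n) x a := by
    have htot := Finset.add_sum_erase Finset.univ
      (fun y => ((Matrix.of P) ^ n) x y) (Finset.mem_univ a)
    have hF := Finset.add_sum_erase Finset.univ
      (fun y => ((Matrix.of P) ^ n) x y * (if y = a then 0 else 1)) (Finset.mem_univ a)
    have herase : ∑ y ∈ Finset.univ.erase a,
        ((Matrix.of P) ^ n) x y * (if y = a then 0 else 1)
        = ∑ y ∈ Finset.univ.erase a, ((Matrix.of P) ^ n) x y := by
      refine Finset.sum_congr rfl fun y hy => ?_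
      rw [if_neg (Finset.mem_erase.1 hy).1, mul_one]
    simp only [eq_self_iff_true, if_true, mul_zero, zero_add] at hF
    rw [← hF, herase]
    linarith [htot]
  rw [hpowsum n x] at h2
  calc ∑ y, ((Matrix.of P) ^ n) x y * eFn P 0 y
      ≤ 1 - ((Matrix.of P) ^ n) x a := by rw [← h2]; exact h1
    _ < 1 := by linarith

end StopAux
namespace StopAux

variable {E : Type*} [Fintype E] [Nonempty E]

noncomputable def beta (P : E → E → ℝ) (n : ℕ) : ℝ :=
  Finset.univ.sup' Finset.univ_nonempty (eFn P n)

lemma le_beta (P : E → E → ℝ) (n : ℕ) (x : E) : eFn P n x ≤ beta P n :=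
  Finset.le_sup' (eFn P n) (Finset.mem_univ x)

lemma beta_nonneg {P : E → E → ℝ} (hP : IsTransition P) (n : ℕ) : 0 ≤ beta P n :=
  le_trans (eFn_nonneg hP n (Classical.arbitrary E)) (le_beta P n _)

lemma beta_le_one {P : E → E → ℝ} (hP : IsTransition P) (n : ℕ) : beta P n ≤ 1 :=
  Finset.sup'_le _ _ fun x _ => eFn_le_one hP n x

lemma beta_antitone {P : E → E → ℝ} (hP : IsTransition P) : Antitone (beta P) :=
  antitone_nat_of_succ_le fun n =>
    Finset.sup'_le _ _ fun x _ => (eFn_succ_le hP n x).trans (le_beta P n x)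

lemma eFn_add_le {P : E → E → ℝ} (hP : IsTransition P) (m : ℕ) :
    ∀ (n : ℕ) (x : E), eFn P (n + m) x ≤ beta P m * eFn P n x
  | 0, x => by
    rw [zero_add]
    by_cases hx : P x x = 1
    · rw [eFn_absorbing hP hx, eFn_absorbing hP hx, mul_zero]
    · have h0 : eFn P 0 x = 1 := by
        show (if P x x = 1 then (0:ℝ) else 1) = 1
        rw [if_neg hx]
      rw [h0, mul_one]
      exact le_beta P m x
  | (n + 1), x => by
    rw [show n + 1 + m = (n + m) + 1 from by omega]
    show ∑ y, P x y * eFn P (n + m) y ≤ beta P m * ∑ y, P x y * eFn P n y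
    rw [Finset.mul_sum]
    refine Finset.sum_le_sum fun y _ => ?_
    calc P x y * eFn P (n + m) y ≤ P x y * (beta P m * eFn P n y) :=
          mul_le_mul_of_nonneg_left (eFn_add_le hP m n y) (hP.1 x y)
      _ = beta P m * (P x y * eFn P n y) := by ring

lemma beta_add_le {P : E → E → ℝ} (hP : IsTransition P) (n m : ℕ) :
    beta P (n + m) ≤ beta P m * beta P n :=
  Finset.sup'_le _ _ fun x _ => (eFn_add_le hP m n x).trans
    (mul_le_mul_of_nonneg_left (le_beta P n x) (beta_nonneg hP m))

lemma beta_tendsto [DecidableEq E] {P : E → E → ℝ} (hP : IsTransition P)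
    (habs : IsAbsorbingChain P) : Filter.Tendsto (beta P) Filter.atTop (nhds 0) := by
  have hall : ∀ x : E, ∃ n, eFn P n x < 1 := by
    intro x
    obtain ⟨a, n, ha, hpos⟩ := habs x
    exact ⟨n, eFn_lt_one_of_abs hP ha hpos⟩
  choose nn hnn using hall
  set N : ℕ := Finset.univ.sup nn + 1 with hNdef
  have hN : 0 < N := Nat.succ_pos _
  have hbN : beta P N < 1 := by
    rw [beta, Finset.sup'_lt_iff]
    intro x _
    have hle : nn x ≤ N := le_trans (Finset.le_sup (Finset.mem_univ x)) (Nat.le_succ _)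
    exact lt_of_le_of_lt (eFn_antitone hP x hle) (hnn x)
  have h0N : 0 ≤ beta P N := beta_nonneg hP N
  have hpow : ∀ k : ℕ, beta P (N * k) ≤ beta P N ^ k := by
    intro k
    induction k with
    | zero => simpa using beta_le_one hP 0
    | succ k ih =>
      have h1 : beta P (N * (k + 1)) ≤ beta P N * beta P (N * k) := by
        rw [show N * (k + 1) = N * k + N from by ring]
        exact beta_add_le hP (N * k) N
      calc beta P (N * (k + 1)) ≤ beta P N * beta P (N * k) := h1
        _ ≤ beta P N * beta P N ^ k := mul_le_mul_of_nonneg_left ih h0N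
        _ = beta P N ^ (k + 1) := by rw [pow_succ]; ring
  have hbnd : ∀ n : ℕ, beta P n ≤ beta P N ^ (n / N) := by
    intro n
    calc beta P n ≤ beta P (N * (n / N)) := beta_antitone hP (Nat.mul_div_le n N)
      _ ≤ beta P N ^ (n / N) := hpow _
  have hdiv : Filter.Tendsto (fun n : ℕ => n / N) Filter.atTop Filter.atTop := by
    refine Filter.tendsto_atTop_atTop.2 fun b => ⟨b * N, fun a ha => ?_⟩
    exact (Nat.le_div_iff_mul_le hN).2 ha
  have hp := (tendsto_pow_atTop_nhds_zero_of_lt_one h0N hbN).comp hdiv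
  exact squeeze_zero (fun n => beta_nonneg hP n) hbnd hp

lemma eFn_tendsto_zero [DecidableEq E] {P : E → E → ℝ} (hP : IsTransition P)
    (habs : IsAbsorbingChain P) (x : E) :
    Filter.Tendsto (fun n => eFn P n x) Filter.atTop (nhds 0) :=
  squeeze_zero (fun n => eFn_nonneg hP n x) (fun n => le_beta P n x)
    (beta_tendsto hP habs)

end StopAux
namespace StopAux

open Filter

variable {E : Type*} [Fintype E]

lemma phiSeq_diff_le {P : E → E → ℝ} (hP : IsTransition P) {p : E → ℝ}
    (hp : IsStrategy p) {f : E → ℝ} {M : ℝ} (hf : ∀ y, |f y| ≤ M) :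
    ∀ (n k : ℕ) (x : E),
      |phiSeq P p f (n + k) x - phiSeq P p f n x| ≤ 2 * M * eFn P n x
  | 0, k, x => by
    rw [zero_add]
    by_cases hx : P x x = 1
    · rw [phiSeq_absorbing hP p f hx k, show phiSeq P p f 0 x = f x from rfl,
        sub_self, abs_zero]
      have hM : 0 ≤ M := le_trans (abs_nonneg _) (hf x)
      exact mul_nonneg (by linarith) (eFn_nonneg hP 0 x)
    · have h0 : eFn P 0 x = 1 := by
        show (if P x x = 1 then (0:ℝ) else 1) = 1
        rw [if_neg hx]
      rw [h0, mul_one]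
      calc |phiSeq P p f k x - phiSeq P p f 0 x|
          ≤ |phiSeq P p f k x| + |phiSeq P p f 0 x| := abs_sub _ _
        _ ≤ M + M := add_le_add (phiSeq_abs_le hP hp hf k x) (phiSeq_abs_le hP hp hf 0 x)
        _ = 2 * M := by ring
  | (n + 1), k, x => by
    rw [show n + 1 + k = (n + k) + 1 from by omega]
    have hrw : phiSeq P p f ((n + k) + 1) x - phiSeq P p f (n + 1) x
        = (1 - p x) * ∑ y, P x y * (phiSeq P p f (n + k) y - phiSeq P p f n y) := by
      show (p x * f x + (1 - p x) * step P (phiSeq P p f (n + k)) x)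
          - (p x * f x + (1 - p x) * step P (phiSeq P p f n) x) = _
      rw [step, step]
      simp only [mul_sub, Finset.sum_sub_distrib]
      ring
    rw [hrw]
    have h1 := (hp x).1
    have h2 := (hp x).2
    rw [abs_mul, abs_of_nonneg (show (0:ℝ) ≤ 1 - p x by linarith)]
    have hin : |∑ y, P x y * (phiSeq P p f (n + k) y - phiSeq P p f n y)|
        ≤ 2 * M * eFn P (n + 1) x := by
      calc |∑ y, P x y * (phiSeq P p f (n + k) y - phiSeq P p f n y)|
          ≤ ∑ y, |P x y * (phiSeq P p f (n + k) y - phiSeq P p f n y)| :=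
            Finset.abs_sum_le_sum_abs _ _
        _ ≤ ∑ y, P x y * (2 * M * eFn P n y) := by
            refine Finset.sum_le_sum fun y _ => ?_
            rw [abs_mul, abs_of_nonneg (hP.1 x y)]
            exact mul_le_mul_of_nonneg_left (phiSeq_diff_le hP hp hf n k y) (hP.1 x y)
        _ = 2 * M * ∑ y, P x y * eFn P n y := by
            rw [Finset.mul_sum]
            exact Finset.sum_congr rfl fun y _ => by ring
        _ = 2 * M * eFn P (n + 1) x := rfl
    have hnn : (0:ℝ) ≤ |∑ y, P x y * (phiSeq P p f (n + k) y - phiSeq P p f n y)| :=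
      abs_nonneg _
    nlinarith

lemma phiSeq_diff_le' {P : E → E → ℝ} (hP : IsTransition P) {p : E → ℝ}
    (hp : IsStrategy p) {f : E → ℝ} {M : ℝ} (hf : ∀ y, |f y| ≤ M)
    {n m : ℕ} (hnm : n ≤ m) (x : E) :
    |phiSeq P p f m x - phiSeq P p f n x| ≤ 2 * M * eFn P n x := by
  have := phiSeq_diff_le hP hp hf n (m - n) x
  rwa [Nat.add_sub_cancel' hnm] at this

lemma phiSeq_tendsto_phi [DecidableEq E] {P : E → E → ℝ} (hP : IsTransition P)
    (habs : IsAbsorbingChain P) {p : E → ℝ} (hp : IsStrategy p)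
    {f : E → ℝ} {M : ℝ} (hf : ∀ y, |f y| ≤ M) (x : E) :
    Tendsto (fun n => phiSeq P p f n x) atTop (nhds (phi P p f x)) := by
  haveI : Nonempty E := ⟨x⟩
  have hcauchy : CauchySeq (fun n => phiSeq P p f n x) := by
    refine cauchySeq_of_le_tendsto_0 (fun N => 4 * M * eFn P N x) ?_ ?_
    · intro n m N hn hm
      rw [Real.dist_eq]
      have h1 := phiSeq_diff_le' hP hp hf hn x
      have h2 := phiSeq_diff_le' hP hp hf hm x
      calc |phiSeq P p f n x - phiSeq P p f m x|
          ≤ |phiSeq P p f n x - phiSeq P p f N x|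
            + |phiSeq P p f N x - phiSeq P p f m x| := abs_sub_le _ _ _
        _ ≤ 2 * M * eFn P N x + 2 * M * eFn P N x := by
            rw [abs_sub_comm (phiSeq P p f N x)]
            exact add_le_add h1 h2
        _ = 4 * M * eFn P N x := by ring
    · have := (eFn_tendsto_zero hP habs x).const_mul (4 * M)
      simpa using this
  obtain ⟨L, hL⟩ := cauchySeq_tendsto_of_complete hcauchy
  rwa [phi, hL.limUnder_eq]

lemma phi_sub_phiSeq_le [DecidableEq E] {P : E → E → ℝ} (hP : IsTransition P)
    (habs : IsAbsorbingChain P) {p : E → ℝ} (hp : IsStrategy p)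
    {f : E → ℝ} {M : ℝ} (hf : ∀ y, |f y| ≤ M) (n : ℕ) (x : E) :
    |phi P p f x - phiSeq P p f n x| ≤ 2 * M * eFn P n x := by
  have hlim : Tendsto (fun m => |phiSeq P p f m x - phiSeq P p f n x|) atTop
      (nhds (|phi P p f x - phiSeq P p f n x|)) :=
    (((phiSeq_tendsto_phi hP habs hp hf x).sub tendsto_const_nhds).abs)
  refine le_of_tendsto hlim ?_
  filter_upwards [eventually_ge_atTop n] with m hm
  exact phiSeq_diff_le' hP hp hf hm x

end StopAux
namespace StopAux

open Filter

variable {E : Type*} [Fintype E]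

lemma Bterm_tendsto [DecidableEq E] {P : E → E → ℝ} (hP : IsTransition P)
    (habs : IsAbsorbingChain P) {p : E → ℝ} (hp : IsStrategy p)
    {f : E → ℝ} {M : ℝ} (hM : 0 ≤ M) (hf : ∀ y, |f y| ≤ M) (x : E) :
    Tendsto (fun n => Bterm P p f n x) atTop
      (nhds (phi P p f x - ∑' i, Aterm P p f i x)) := by
  have hsum := Aterm_summable hP hp hM hf x
  have h1 : Tendsto (fun n => ∑ i ∈ Finset.range (n + 1), Aterm P p f i x) atTop
      (nhds (∑' i, Aterm P p f i x)) :=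
    (hsum.hasSum.tendsto_sum_nat).comp (tendsto_add_atTop_nat 1)
  have h3 := (phiSeq_tendsto_phi hP habs hp hf x).sub h1
  refine h3.congr fun n => ?_
  rw [phiSeq_eq]
  ring

lemma phi_repr [DecidableEq E] {P : E → E → ℝ} (hP : IsTransition P)
    (habs : IsAbsorbingChain P) {p : E → ℝ} (hp : IsStrategy p)
    {f : E → ℝ} {M : ℝ} (hM : 0 ≤ M) (hf : ∀ y, |f y| ≤ M) (x : E) :
    phi P p f x = (∑' i, Aterm P p f i x)
      + limUnder atTop (fun n => Bterm P p f n x) := by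
  rw [(Bterm_tendsto hP habs hp hM hf x).limUnder_eq]
  ring

lemma pathExp_shiftA (P : E → E → ℝ) (p f : E → ℝ) (i : ℕ) (x : E) :
    pathExp P x (i + 1) (fun ω =>
      (∏ j : Fin i, (1 - p (ω j.succ.castSucc)))
        * (p (ω (Fin.last (i + 1))) * f (ω (Fin.last (i + 1)))))
    = ∑ y, P x y * Aterm P p f i y := by
  exact Finset.sum_congr rfl fun y _ => by congr 1

lemma pathExp_shiftB (P : E → E → ℝ) (p f : E → ℝ) (n : ℕ) (x : E) :
    pathExp P x (n + 1) (fun ω =>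
      (∏ j : Fin (n + 1), (1 - p (ω j.succ))) * f (ω (Fin.last (n + 1))))
    = ∑ y, P x y * Bterm P p f n y := by
  exact Finset.sum_congr rfl fun y _ => by congr 1

lemma step_phi_repr [DecidableEq E] {P : E → E → ℝ} (hP : IsTransition P)
    (habs : IsAbsorbingChain P) {p : E → ℝ} (hp : IsStrategy p)
    {f : E → ℝ} {M : ℝ} (hM : 0 ≤ M) (hf : ∀ y, |f y| ≤ M) (x : E) :
    step P (phi P p f) x = (∑' i, ∑ y, P x y * Aterm P p f i y)
      + limUnder atTop (fun n => ∑ y, P x y * Bterm P p f n y) := by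
  have htsum : ∑' i, ∑ y, P x y * Aterm P p f i y
      = ∑ y, P x y * ∑' i, Aterm P p f i y := by
    rw [Summable.tsum_finsetSum (fun y _ => (Aterm_summable hP hp hM hf y).mul_left (P x y))]
    exact Finset.sum_congr rfl fun y _ => tsum_mul_left
  have hlimB : Tendsto (fun n => ∑ y, P x y * Bterm P p f n y) atTop
      (nhds (∑ y, P x y * (phi P p f y - ∑' i, Aterm P p f i y))) :=
    tendsto_finset_sum _ fun y _ => (Bterm_tendsto hP habs hp hM hf y).const_mul (P x y)
  rw [hlimB.limUnder_eq, htsum, step, ← Finset.sum_add_distrib]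
  refine Finset.sum_congr rfl fun y _ => by ring

end StopAux
namespace StopAux

open Filter

variable {E : Type*} [Fintype E]

lemma phiSeq_continuous (P : E → E → ℝ) (f : E → ℝ) :
    ∀ (n : ℕ) (x : E), Continuous fun p : E → ℝ => phiSeq P p f n x
  | 0, x => continuous_const
  | (n + 1), x => by
    show Continuous fun p : E → ℝ =>
      p x * f x + (1 - p x) * ∑ y, P x y * phiSeq P p f n y
    exact ((continuous_apply x).mul continuous_const).add
      ((continuous_const.sub (continuous_apply x)).mul
        (continuous_finset_sum _ fun y _ =>
          continuous_const.mul (phiSeq_continuous P f n y)))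

lemma phi_continuousOn [DecidableEq E] {P : E → E → ℝ} (hP : IsTransition P)
    (habs : IsAbsorbingChain P) (f : E → ℝ) (x : E) :
    ContinuousOn (fun p : E → ℝ => phi P p f x) {p | IsStrategy p} := by
  haveI : Nonempty E := ⟨x⟩
  set M : ℝ := ∑ y, |f y| with hMdef
  have hf : ∀ y, |f y| ≤ M := fun y =>
    Finset.single_le_sum (f := fun y => |f y|) (fun i _ => abs_nonneg (f i))
      (Finset.mem_univ y)
  have hunif : TendstoUniformlyOn (fun n (p : E → ℝ) => phiSeq P p f n x)
      (fun p => phi P p f x) atTop {p | IsStrategy p} := by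
    rw [Metric.tendstoUniformlyOn_iff]
    intro ε hε
    have h2M : Tendsto (fun n => 2 * M * eFn P n x) atTop (nhds 0) := by
      simpa using (eFn_tendsto_zero hP habs x).const_mul (2 * M)
    have hev : ∀ᶠ n in atTop, 2 * M * eFn P n x < ε :=
      h2M.eventually_lt_const hε
    filter_upwards [hev] with n hn p hp
    rw [Real.dist_eq]
    exact lt_of_le_of_lt (phi_sub_phiSeq_le hP habs hp hf n x) hn
  exact hunif.continuousOn
    (Filter.Eventually.of_forall fun n => (phiSeq_continuous P f n x).continuousOn).frequently

lemma step_phi_continuousOn [DecidableEq E] {P : E → E → ℝ} (hP : IsTransition P)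
    (habs : IsAbsorbingChain P) (f : E → ℝ) (x : E) :
    ContinuousOn (fun p : E → ℝ => step P (phi P p f) x) {p | IsStrategy p} := by
  show ContinuousOn (fun p : E → ℝ => ∑ y, P x y * phi P p f y) _
  refine continuousOn_finset_sum _ fun y _ => ?_
  exact continuousOn_const.mul (phi_continuousOn hP habs f y)

end StopAux

/-- Lemma A.2: the series representations
`φ_p(x) = E_x[1_{τ_p<∞} ∑_{i≥0} ∏_{j=1}^{i}(1-p_{X_{j-1}}) p_{X_i} f(X_i)
          + 1_{τ_p=∞} lim_n f(X_n)]` and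
`E_x[φ_p(X_1)] = E_x[1_{τ_p<∞} ∑_{i≥1} ∏_{j=2}^{i}(1-p_{X_{j-1}}) p_{X_i} f(X_i)
          + 1_{τ_p=∞} lim_n f(X_n)]`
(conditioning on the chain, the indicator terms have conditional probabilities given by
the corresponding products of `1 - p`, and the `τ_p = ∞` term is the limit of the
finite-horizon weighted expectations), together with continuity of
`p ↦ φ_p(x)` and `p ↦ E_x[φ_p(X_1)]` on `[0,1]^N`. -/
theorem phi_series_representation_and_continuity [Fintype E] [DecidableEq E]
    (P : E → E → ℝ) (hP : IsTransition P) (habs : IsAbsorbingChain P)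
    (f : E → ℝ) :
    (∀ p : E → ℝ, IsStrategy p → ∀ x : E,
      phi P p f x =
        (∑' i : ℕ, pathExp P x i (fun ω =>
          (∏ j : Fin i, (1 - p (ω j.castSucc)))
            * (p (ω (Fin.last i)) * f (ω (Fin.last i)))))
        + limUnder atTop (fun n => pathExp P x n (fun ω =>
            (∏ j : Fin (n + 1), (1 - p (ω j))) * f (ω (Fin.last n))))) ∧
    (∀ p : E → ℝ, IsStrategy p → ∀ x : E,
      step P (phi P p f) x =
        (∑' i : ℕ, pathExp P x (i + 1) (fun ω =>
          (∏ j : Fin i, (1 - p (ω j.succ.castSucc)))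
            * (p (ω (Fin.last (i + 1))) * f (ω (Fin.last (i + 1))))))
        + limUnder atTop (fun n => pathExp P x (n + 1) (fun ω =>
            (∏ j : Fin (n + 1), (1 - p (ω j.succ))) * f (ω (Fin.last (n + 1)))))) ∧
    (∀ x : E, ContinuousOn (fun p : E → ℝ => phi P p f x) {p | IsStrategy p}) ∧
    (∀ x : E, ContinuousOn (fun p : E → ℝ => step P (phi P p f) x) {p | IsStrategy p}) := by
  have hM : (0:ℝ) ≤ ∑ y, |f y| := Finset.sum_nonneg fun y _ => abs_nonneg (f y)
  have hf : ∀ y, |f y| ≤ ∑ y, |f y| := fun y =>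
    Finset.single_le_sum (f := fun y => |f y|) (fun i _ => abs_nonneg (f i))
      (Finset.mem_univ y)
  refine ⟨?_, ?_, ?_, ?_⟩
  · intro p hp x
    haveI : Nonempty E := ⟨x⟩
    exact StopAux.phi_repr hP habs hp hM hf x
  · intro p hp x
    haveI : Nonempty E := ⟨x⟩
    rw [tsum_congr (fun i => StopAux.pathExp_shiftA P p f i x),
      show (fun n => pathExp P x (n + 1) (fun ω =>
          (∏ j : Fin (n + 1), (1 - p (ω j.succ))) * f (ω (Fin.last (n + 1)))))
        = (fun n => ∑ y, P x y * StopAux.Bterm P p f n y) from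
        funext fun n => StopAux.pathExp_shiftB P p f n x]
    exact StopAux.step_phi_repr hP habs hp hM hf x
  · intro x
    exact StopAux.phi_continuousOn hP habs f x
  · intro x
    exact StopAux.step_phi_continuousOn hP habs f x
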